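/- Let d_B, m be positive integers. Let F be a nonempty set of 1-Lipschitz measurable functions D : ℝ^{m} → [0,1], and let φ : ℝ → ℝ be a nondecreasing L_φ-Lipschitz function with |φ(t)| ≤ Δ for all t ∈ [0,1]. Let G : ℝ^{d_B} → ℝ^{m} be a differentiable map that is L_h-Lipschitz and satisfies the second-order smoothness condition with constant L_G. Let C ⊂ ℝ^{d_B} be a finite set of anchor points, and let γ : ℝ^{d_B} → (C → ℝ) be a measurable coefficient map with Σ_{v∈C} γ_v(h) = 1 for every h; write r(h) = Σ_{v∈C} γ_v(h) v and g(h) = Σ_{v∈C} γ_v(h) G(v). Let H be a probability measure on ℝ^{d_B} such that the function h ↦ L_h ‖h − r(h)‖ + L_G Σ_{v∈C} |γ_v(h)| ‖v − r(h)‖² is integrable with respect to H, and let ν be any probability measure on ℝ^{m}. Then d_{F,φ}(H.map g, ν) ≤ d_{F,φ}(H.map G, ν) + L_φ ∫ ( L_h ‖h − r(h)‖ + L_G Σ_{v∈C} |γ_v(h)| ‖v − r(h)‖² ) dH(h). -/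
import Mathlib


open MeasureTheory
open scoped BigOperators



lemma my_abs_integral_le {X : Type*} [MeasurableSpace X] (μ : Measure X) [IsProbabilityMeasure μ]
    {f : X → ℝ} {Δ : ℝ} (hb : ∀ x, |f x| ≤ Δ) :
    |∫ x, f x ∂μ| ≤ Δ := by
  have := norm_integral_le_of_norm_le (μ := μ) (f := f) (g := fun _ => Δ)
    (integrable_const Δ) (ae_of_all _ fun x => by simpa [Real.norm_eq_abs] using hb x)
  simpa [Real.norm_eq_abs] using this

lemma my_integrable_of_abs_le {X : Type*} [MeasurableSpace X] (μ : Measure X)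
    [IsProbabilityMeasure μ] {f : X → ℝ} {Δ : ℝ} (hf : AEStronglyMeasurable f μ)
    (hb : ∀ x, |f x| ≤ Δ) : Integrable f μ :=
  (integrable_const Δ).mono' hf (ae_of_all _ fun x => by simpa [Real.norm_eq_abs] using hb x)


/-- The neural network distance `d_{F,φ}(μ, ν)` between a generated distribution `μ` and a real
distribution `ν`, with discriminator class `F` and measuring function `φ` (the constant
`2 φ(1/2)` is omitted, as in the paper). -/
noncomputable def nnDist {X : Type*} [MeasurableSpace X] (F : Set (X → ℝ)) (φ : ℝ → ℝ)
    (μ ν : Measure X) : ℝ :=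
  ⨆ D : F, |(∫ x, φ ((D : X → ℝ) x) ∂ν) + ∫ x, φ (1 - (D : X → ℝ) x) ∂μ|

/-- **Key chained inequality in the proof of the supplementary generalization theorem
(Theorem D.1):** replacing the generator's input by its local coordinate coding costs at most
`L_φ` times the expected localization measure:
`d_{F,φ}(H.map g, ν) ≤ d_{F,φ}(H.map G, ν)
  + L_φ ∫ (L_h ‖h − r h‖ + L_G ∑_{v∈C} |γ_v(h)| ‖v − r h‖²) dH`. -/
theorem nnDist_lcc_generator_bound
    (dB m : ℕ) (hdB : 0 < dB) (hm : 0 < m)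
    (F : Set (EuclideanSpace ℝ (Fin m) → ℝ)) (hF : F.Nonempty)
    (hFmeas : ∀ D ∈ F, Measurable D)
    (hFlip : ∀ D ∈ F, ∀ x y, |D x - D y| ≤ ‖x - y‖)
    (hFrange : ∀ D ∈ F, ∀ x, D x ∈ Set.Icc (0 : ℝ) 1)
    (φ : ℝ → ℝ) (hφmono : Monotone φ) (Lφ : ℝ) (hLφ : 0 < Lφ)
    (hφlip : ∀ s t, |φ s - φ t| ≤ Lφ * |s - t|)
    (Δ : ℝ) (hΔ : 0 < Δ) (hφbound : ∀ t ∈ Set.Icc (0 : ℝ) 1, |φ t| ≤ Δ)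
    (G : EuclideanSpace ℝ (Fin dB) → EuclideanSpace ℝ (Fin m))
    (Lh LG : ℝ) (hLh : 0 < Lh) (hLG : 0 < LG)
    (hGdiff : Differentiable ℝ G)
    (hGlip : ∀ x y, ‖G x - G y‖ ≤ Lh * ‖x - y‖)
    (hGsmooth : ∀ x y, ‖G y - G x - fderiv ℝ G x (y - x)‖ ≤ LG * ‖x - y‖ ^ 2)
    (C : Finset (EuclideanSpace ℝ (Fin dB)))
    (γ : EuclideanSpace ℝ (Fin dB) → EuclideanSpace ℝ (Fin dB) → ℝ)
    (hγmeas : ∀ v ∈ C, Measurable fun h => γ h v)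
    (hγsum : ∀ h, ∑ v ∈ C, γ h v = 1)
    (H : Measure (EuclideanSpace ℝ (Fin dB))) [IsProbabilityMeasure H]
    (hint : Integrable (fun h =>
      Lh * ‖h - ∑ v ∈ C, γ h v • v‖ +
        LG * ∑ v ∈ C, |γ h v| * ‖v - ∑ w ∈ C, γ h w • w‖ ^ 2) H)
    (ν : Measure (EuclideanSpace ℝ (Fin m))) [IsProbabilityMeasure ν] :
    nnDist F φ (H.map fun h => ∑ v ∈ C, γ h v • G v) ν ≤
      nnDist F φ (H.map G) ν +
        Lφ * ∫ h, (Lh * ‖h - ∑ v ∈ C, γ h v • v‖ +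
          LG * ∑ v ∈ C, |γ h v| * ‖v - ∑ w ∈ C, γ h w • w‖ ^ 2) ∂H := by
  classical
  haveI : Nonempty F := hF.to_subtype
  set g : EuclideanSpace ℝ (Fin dB) → EuclideanSpace ℝ (Fin m) :=
    fun h => ∑ v ∈ C, γ h v • G v with hgdef
  set r : EuclideanSpace ℝ (Fin dB) → EuclideanSpace ℝ (Fin dB) :=
    fun h => ∑ v ∈ C, γ h v • v with hrdef
  set M : EuclideanSpace ℝ (Fin dB) → ℝ :=
    fun h => Lh * ‖h - r h‖ + LG * ∑ v ∈ C, |γ h v| * ‖v - r h‖ ^ 2 with hMdef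
  -- key pointwise bound
  have key : ∀ h, ‖g h - G h‖ ≤ M h := by
    intro h
    have hsum1 : ∑ v ∈ C, γ h v • G (r h) = G (r h) := by
      rw [← Finset.sum_smul, hγsum, one_smul]
    have hlin : ∑ v ∈ C, γ h v • (fderiv ℝ G (r h)) (v - r h) = 0 := by
      have h1 : ∑ v ∈ C, γ h v • (fderiv ℝ G (r h)) (v - r h)
          = (fderiv ℝ G (r h)) (∑ v ∈ C, γ h v • (v - r h)) := by
        rw [map_sum]
        simp [_root_.map_smul]
      have h2 : ∑ v ∈ C, γ h v • (v - r h) = 0 := by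
        simp only [smul_sub, Finset.sum_sub_distrib, ← Finset.sum_smul, hγsum, one_smul]
        simp [hrdef]
      rw [h1, h2, map_zero]
    have e1 : g h - G (r h)
        = ∑ v ∈ C, γ h v • (G v - G (r h) - (fderiv ℝ G (r h)) (v - r h)) := by
      simp only [smul_sub, Finset.sum_sub_distrib, hsum1, hlin, hgdef]
      abel
    have e2 : ‖g h - G (r h)‖ ≤ LG * ∑ v ∈ C, |γ h v| * ‖v - r h‖ ^ 2 := by
      rw [e1]
      calc ‖∑ v ∈ C, γ h v • (G v - G (r h) - (fderiv ℝ G (r h)) (v - r h))‖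
          ≤ ∑ v ∈ C, ‖γ h v • (G v - G (r h) - (fderiv ℝ G (r h)) (v - r h))‖ :=
            norm_sum_le _ _
        _ = ∑ v ∈ C, |γ h v| * ‖G v - G (r h) - (fderiv ℝ G (r h)) (v - r h)‖ := by
            simp [norm_smul]
        _ ≤ ∑ v ∈ C, |γ h v| * (LG * ‖v - r h‖ ^ 2) := by
            refine Finset.sum_le_sum fun v _ => ?_
            refine mul_le_mul_of_nonneg_left ?_ (abs_nonneg _)
            have := hGsmooth (r h) v
            rwa [norm_sub_rev (r h) v] at this
        _ = LG * ∑ v ∈ C, |γ h v| * ‖v - r h‖ ^ 2 := by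
            rw [Finset.mul_sum]; congr 1; ext v; ring
    have e3 : ‖G (r h) - G h‖ ≤ Lh * ‖h - r h‖ := by
      have := hGlip (r h) h
      rwa [norm_sub_rev (r h) h] at this
    calc ‖g h - G h‖ ≤ ‖g h - G (r h)‖ + ‖G (r h) - G h‖ := by
          have := norm_add_le (g h - G (r h)) (G (r h) - G h)
          simpa using this
      _ ≤ M h := by rw [hMdef]; dsimp only; linarith
  have hGmeas : Measurable G := hGdiff.continuous.measurable
  have hgmeas : Measurable g := by
    apply Finset.measurable_sum
    exact fun v hv => (hγmeas v hv).smul_const (G v)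
  have hφmeas : Measurable φ := hφmono.measurable
  haveI : IsProbabilityMeasure (H.map G) := Measure.isProbabilityMeasure_map hGmeas.aemeasurable
  have hintM := hint
  -- main estimate per discriminator
  unfold nnDist
  refine ciSup_le fun D => ?_
  obtain ⟨D, hD⟩ := D
  dsimp only
  have hDm : Measurable D := hFmeas D hD
  have f1meas : Measurable fun x => φ (1 - D x) := hφmeas.comp (measurable_const.sub hDm)
  have f1bound : ∀ x, |φ (1 - D x)| ≤ Δ := by
    intro x
    refine hφbound _ ?_
    have := hFrange D hD x
    constructor <;> [linarith [this.2]; linarith [this.1]]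
  have f0bound : ∀ x, |φ (D x)| ≤ Δ := fun x => hφbound _ (hFrange D hD x)
  rw [integral_map hgmeas.aemeasurable f1meas.aestronglyMeasurable]
  set A := ∫ x, φ (D x) ∂ν with hA
  have hint1 : Integrable (fun h => φ (1 - D (g h))) H :=
    my_integrable_of_abs_le H ((f1meas.comp hgmeas).aestronglyMeasurable)
      (fun h => f1bound (g h))
  have hint2 : Integrable (fun h => φ (1 - D (G h))) H :=
    my_integrable_of_abs_le H ((f1meas.comp hGmeas).aestronglyMeasurable)
      (fun h => f1bound (G h))
  have hdiff : ∀ h, |φ (1 - D (g h)) - φ (1 - D (G h))| ≤ Lφ * M h := by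
    intro h
    calc |φ (1 - D (g h)) - φ (1 - D (G h))| ≤ Lφ * |(1 - D (g h)) - (1 - D (G h))| :=
          hφlip _ _
      _ = Lφ * |D (g h) - D (G h)| := by rw [abs_sub_comm]; ring_nf
      _ ≤ Lφ * ‖g h - G h‖ := by
          exact mul_le_mul_of_nonneg_left (hFlip D hD _ _) hLφ.le
      _ ≤ Lφ * M h := mul_le_mul_of_nonneg_left (key h) hLφ.le
  have hstep : |(∫ h, φ (1 - D (g h)) ∂H) - ∫ h, φ (1 - D (G h)) ∂H| ≤ Lφ * ∫ h, M h ∂H := by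
    rw [← integral_sub hint1 hint2, ← MeasureTheory.integral_const_mul]
    calc |∫ h, (φ (1 - D (g h)) - φ (1 - D (G h))) ∂H|
        ≤ ∫ h, |φ (1 - D (g h)) - φ (1 - D (G h))| ∂H := by
          simpa [Real.norm_eq_abs] using
            norm_integral_le_integral_norm (fun h => φ (1 - D (g h)) - φ (1 - D (G h))) (μ := H)
      _ ≤ ∫ h, Lφ * M h ∂H := by
          refine integral_mono (hint1.sub hint2).abs (hintM.const_mul Lφ) fun h => hdiff h
  have hmain : |A + ∫ h, φ (1 - D (G h)) ∂H| ≤ nnDist F φ (H.map G) ν := by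
    have hbdd : BddAbove (Set.range fun D' : F =>
        |(∫ x, φ ((D' : _ → ℝ) x) ∂ν) + ∫ x, φ (1 - (D' : _ → ℝ) x) ∂(H.map G)|) := by
      refine ⟨2 * Δ, ?_⟩
      rintro _ ⟨D', rfl⟩
      have h1 : |∫ x, φ ((D' : _ → ℝ) x) ∂ν| ≤ Δ :=
        my_abs_integral_le ν fun x => hφbound _ (hFrange _ D'.2 x)
      have h2 : |∫ x, φ (1 - (D' : _ → ℝ) x) ∂(H.map G)| ≤ Δ := by
        refine my_abs_integral_le (H.map G) fun x => hφbound _ ?_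
        have := hFrange _ D'.2 x
        constructor <;> [linarith [this.2]; linarith [this.1]]
      calc |(∫ x, φ ((D' : _ → ℝ) x) ∂ν) + ∫ x, φ (1 - (D' : _ → ℝ) x) ∂(H.map G)|
          ≤ _ + _ := abs_add_le _ _
        _ ≤ 2 * Δ := by linarith
    have hle := le_ciSup hbdd (⟨D, hD⟩ : F)
    unfold nnDist
    refine le_trans (le_of_eq ?_) hle
    rw [integral_map hGmeas.aemeasurable f1meas.aestronglyMeasurable]
  calc |A + ∫ h, φ (1 - D (g h)) ∂H|
      ≤ |A + ∫ h, φ (1 - D (G h)) ∂H|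
        + |(∫ h, φ (1 - D (g h)) ∂H) - ∫ h, φ (1 - D (G h)) ∂H| := by
        have := abs_add_le (A + ∫ h, φ (1 - D (G h)) ∂H)
          ((∫ h, φ (1 - D (g h)) ∂H) - ∫ h, φ (1 - D (G h)) ∂H)
        simpa [add_sub_cancel] using this
    _ ≤ nnDist F φ (H.map G) ν + Lφ * ∫ h, M h ∂H := add_le_add hmain hstep
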